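/- Given access to oracles add : D_enc × D_enc → D_enc, divide : D_enc × D_enc → D_enc, and equal : D_enc × D_enc → Bool that correctly implement addition, division, and equality on encrypted positive integers, the enumeration procedure (compute enc(1) = divide(c, c), then repeatedly add enc(1) and test equality with c) terminates and returns the plaintext value of any ciphertext c encrypting a positive integer n, after exactly n equality tests. -/
import Mathlib


/-- The enumeration attack: given oracles `add`, `divide`, `equal` correctly
implementing arithmetic and equality on encrypted positive integers, the
procedure that computes `enc 1 = divide c c` and repeatedly adds it, testing
equality with `c`, succeeds exactly at step `n` for a ciphertext `c = enc n`:
hence it terminates and returns the plaintext `n` after exactly `n` equality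
tests (tests at steps `1, ..., n`). -/
theorem enumeration_attack {Denc : Type*} (enc : ℕ+ → Denc)
    (henc : Function.Injective enc)
    (add divide : Denc → Denc → Denc) (equal : Denc → Denc → Bool)
    (hdiv : ∀ a : ℕ+, divide (enc a) (enc a) = enc 1)
    (hadd : ∀ a b : ℕ+, add (enc a) (enc b) = enc (a + b))
    (heq : ∀ a b : ℕ+, (equal (enc a) (enc b) = true) ↔ a = b)
    (n : ℕ+) (c : Denc) (hc : c = enc n)
    (iEnc : ℕ+ → Denc)
    (hstart : iEnc 1 = divide c c)
    (hstep : ∀ k : ℕ+, iEnc (k + 1) = add (iEnc k) (divide c c)) :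
    ∀ k : ℕ+, (equal c (iEnc k) = true) ↔ k = n := by
  subst hc
  have key : ∀ k : ℕ+, iEnc k = enc k := by
    intro k
    refine PNat.recOn k ?_ ?_
    · rw [hstart, hdiv]
    · intro m ih
      rw [hstep, ih, hdiv, hadd]
  intro k
  rw [key, heq, eq_comm]
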